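/- For a reduced cyclic word W, the set LP₁(W) of linked pairs of occurrences of subwords of W contains at most len(W)·(len(W)-1) elements. -/

import Mathlib

/-!
Combinatorial model of the Goldman–Turaev Lie bialgebra of curves on a surface
with boundary, following M. Chas, "Combinatorial Lie bialgebras of curves on
surfaces".

The alphabet `𝔸ₙ = {a₁,…,aₙ, ā₁,…,āₙ}` is modelled by `Letter n := Fin n × Bool`,
with the bar involution flipping the boolean.  Linear words are lists of letters;
a cyclic word is a list up to rotation (`List.IsRotated`).
-/

open List

abbrev Letter (n : ℕ) := Fin n × Bool

namespace ChasCW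

variable {n : ℕ}

/-- The bar involution `x ↦ x̄` on letters. -/
def bar (x : Letter n) : Letter n := (x.1, !x.2)

/-- The formal inverse `W̄` of a linear word `W`. -/
def wordInv (w : List (Letter n)) : List (Letter n) := (w.map bar).reverse

/-- A linear word is freely reduced if no letter is followed by its inverse. -/
def Reduced (w : List (Letter n)) : Prop := w.Chain' (fun a b => b ≠ bar a)

/-- A nonempty word all of whose cyclic rotations are freely reduced:
a representative of a reduced cyclic word. -/
def CyclicallyReduced (w : List (Letter n)) : Prop :=
  w ≠ [] ∧ ∀ i, Reduced (w.rotate i)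

/-- The type of cyclic words: lists of letters up to rotation. -/
abbrev CWord (n : ℕ) := Quotient (List.IsRotated.setoid (Letter n))

/-- The cyclic word `c(w)` determined by a linear word `w`. -/
def cw (w : List (Letter n)) : CWord n := Quotient.mk _ w

/-- A surface symbol: a reduced cyclic word containing every letter of the
alphabet exactly once. -/
def SurfaceSymbol (O : List (Letter n)) : Prop :=
  CyclicallyReduced O ∧ ∀ x : Letter n, O.count x = 1

/-- `w` embeds injectively and orientation-preservingly as a cyclic subsequence
of the cyclic word `O`. -/
def CyclicEmbeds (w O : List (Letter n)) : Prop :=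
  w.Nodup ∧ ∃ i ≤ w.length, ∃ j ≤ O.length, (w.rotate i).Sublist (O.rotate j)

open Classical in
/-- The orientation `o(w) ∈ {-1,0,1}` of a cyclic word relative to the surface
symbol `O`: `1` for an orientation-preserving embedding of rings, `-1` for an
orientation-reversing one, `0` otherwise. -/
noncomputable def orient (O w : List (Letter n)) : ℤ :=
  if CyclicEmbeds w O then 1 else if CyclicEmbeds w O.reverse then -1 else 0

/-- Case (1) of Definition 2.1: `P = p₁p₂`, `Q = q₁q₂` and
`o(c(p̄₁q̄₁p₂q₂)) ≠ 0`. -/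
def Linked1 (O : List (Letter n)) (p₁ p₂ q₁ q₂ : Letter n) : Prop :=
  Reduced [p₁, p₂] ∧ Reduced [q₁, q₂] ∧ orient O [bar p₁, bar q₁, p₂, q₂] ≠ 0

/-- Case (2) of Definition 2.1: `P = p₁Yp₂`, `Q = q₁Yq₂`, `p₁ ≠ q₁`, `p₂ ≠ q₂`,
`Y = x₁X x₂` nonempty, and `o(c(p̄₁q̄₁x₁)) = o(c(p₂q₂x̄₂))`. -/
def Linked2 (O : List (Letter n)) (p₁ p₂ q₁ q₂ x₁ x₂ : Letter n)
    (Y : List (Letter n)) : Prop :=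
  Y ≠ [] ∧ Y.head? = some x₁ ∧ Y.getLast? = some x₂ ∧
  p₁ ≠ q₁ ∧ p₂ ≠ q₂ ∧
  Reduced (p₁ :: (Y ++ [p₂])) ∧ Reduced (q₁ :: (Y ++ [q₂])) ∧
  orient O [bar p₁, bar q₁, x₁] = orient O [p₂, q₂, bar x₂]

/-- Case (3) of Definition 2.1: `P = p₁Yp₂`, `Q = q₁Ȳq₂`, `p₁ ≠ q̄₂`, `p₂ ≠ q̄₁`,
`Y = x₁X x₂` nonempty, and `o(c(q₂p̄₁x₁)) = o(c(q̄₁p₂x̄₂))`. -/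
def Linked3 (O : List (Letter n)) (p₁ p₂ q₁ q₂ x₁ x₂ : Letter n)
    (Y : List (Letter n)) : Prop :=
  Y ≠ [] ∧ Y.head? = some x₁ ∧ Y.getLast? = some x₂ ∧
  p₁ ≠ bar q₂ ∧ p₂ ≠ bar q₁ ∧
  Reduced (p₁ :: (Y ++ [p₂])) ∧ Reduced (q₁ :: (wordInv Y ++ [q₂])) ∧
  orient O [q₂, bar p₁, x₁] = orient O [bar q₁, p₂, bar x₂]

/-- `(P,Q)` is an `O`-linked pair (Definition 2.1). -/
def LinkedPair (O P Q : List (Letter n)) : Prop :=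
  (∃ p₁ p₂ q₁ q₂, P = [p₁, p₂] ∧ Q = [q₁, q₂] ∧ Linked1 O p₁ p₂ q₁ q₂) ∨
  (∃ p₁ p₂ q₁ q₂ x₁ x₂ Y, P = p₁ :: (Y ++ [p₂]) ∧ Q = q₁ :: (Y ++ [q₂]) ∧
    Linked2 O p₁ p₂ q₁ q₂ x₁ x₂ Y) ∨
  (∃ p₁ p₂ q₁ q₂ x₁ x₂ Y, P = p₁ :: (Y ++ [p₂]) ∧ Q = q₁ :: (wordInv Y ++ [q₂]) ∧
    Linked3 O p₁ p₂ q₁ q₂ x₁ x₂ Y)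

/-- The sign of a linked pair `(P,Q)`, computed from the (unique) decomposition
of `P` and `Q` prescribed by Definition 2.1. -/
noncomputable def signLP (O P Q : List (Letter n)) : ℤ :=
  match P, Q with
  | p₁ :: P', q₁ :: Q' =>
    match P'.getLast?, Q'.getLast? with
    | some p₂, some q₂ =>
      let Y := P'.dropLast
      let Z := Q'.dropLast
      if Y = [] then orient O [bar p₁, bar q₁, p₂, q₂]
      else
        match Y.head?, Y.getLast? with
        | some x₁, some _ =>
          if Z = wordInv Y then orient O [q₂, bar p₁, x₁]
          else orient O [bar p₁, bar q₁, x₁]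
        | _, _ => 0
    | _, _ => 0
  | _, _ => 0

/-- The subword of length `l` of (a large power of) the cyclic word `V`,
starting at position `i`.  This encodes occurrences of subwords of powers
of `V`. -/
def segment (V : List (Letter n)) (i l : ℕ) : List (Letter n) :=
  (((List.replicate (l + 1) V).flatten).rotate i).take l

/-- The set `LP₁(W)` of linked pairs of occurrences of subwords of `W`,
an occurrence being encoded by its starting position and its length. -/
def LP1 (O W : List (Letter n)) : Set ((ℕ × ℕ) × (ℕ × ℕ)) :=
  {e | e.1.1 < W.length ∧ e.2.1 < W.length ∧ e.1.2 ≤ W.length ∧ e.2.2 ≤ W.length ∧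
    LinkedPair O (segment W e.1.1 e.1.2) (segment W e.2.1 e.2.2)}

/-- The set `LP₂(V,W)` of linked pairs of the pair of cyclic words `(V,W)`:
pairs of occurrences of subwords of powers of `V` resp. `W` which are linked.
(The normalization `len V^{j-1} < len P ≤ len V^j` is implicit in the encoding
of an occurrence by a starting position `< len V` and a length.) -/
def LP2 (O V W : List (Letter n)) : Set ((ℕ × ℕ) × (ℕ × ℕ)) :=
  {e | e.1.1 < V.length ∧ e.2.1 < W.length ∧
    LinkedPair O (segment V e.1.1 e.1.2) (segment W e.2.1 e.2.2)}

end ChasCW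

namespace ChasCW

-- infra lemmas
open List

lemma bar_bar (x : Letter n) : bar (bar x) = x := by
  simp [bar]

lemma bar_ne_self (x : Letter n) : bar x ≠ x := by
  simp [bar, Prod.ext_iff]

lemma bar_inj {x y : Letter n} (h : bar x = bar y) : x = y := by
  have := congrArg bar h; simpa [bar_bar] using this

lemma orient_nodup {O w : List (Letter n)} (h : orient O w ≠ 0) : w.Nodup := by
  unfold orient at h
  split_ifs at h with h1 h2
  · exact h1.1
  · exact h2.1
  · exact absurd rfl h

def cyc (W : List (Letter n)) (hW : W ≠ []) (m : ℕ) : Letter n :=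
  W[m % W.length]'(Nat.mod_lt _ (List.length_pos_iff.mpr hW))

lemma cyc_congr {W : List (Letter n)} (hW : W ≠ []) {a b : ℕ}
    (h : a % W.length = b % W.length) : cyc W hW a = cyc W hW b := by
  unfold cyc; congr 1

lemma getElem_flatten_replicate {W : List (Letter n)} (hW : W ≠ []) (k j : ℕ)
    (hj : j < ((List.replicate k W).flatten).length) :
    ((List.replicate k W).flatten)[j] = cyc W hW j := by
  induction k generalizing j with
  | zero => simp at hj
  | succ k ih =>
    simp only [List.replicate_succ, List.flatten_cons]
    rcases lt_or_ge j W.length with hlt | hle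
    · rw [List.getElem_append_left hlt]
      unfold cyc
      congr 1
      exact (Nat.mod_eq_of_lt hlt).symm
    · have hj2 : j < (W ++ (List.replicate k W).flatten).length := by
        simpa [List.replicate_succ] using hj
      rw [List.getElem_append_right hle]
      have hj' : j - W.length < ((List.replicate k W).flatten).length := by
        simp only [List.length_append] at hj2
        omega
      rw [ih _ hj']
      apply cyc_congr
      conv_rhs => rw [← Nat.sub_add_cancel hle]
      rw [Nat.add_mod_right]

lemma length_flatten_replicate (W : List (Letter n)) (k : ℕ) :
    ((List.replicate k W).flatten).length = k * W.length := by
  induction k with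
  | zero => simp
  | succ k ih => simp [List.replicate_succ, ih, Nat.succ_mul]; ring

lemma segment_length {W : List (Letter n)} (hW : W ≠ []) (i l : ℕ) :
    (segment W i l).length = l := by
  have hL : 0 < W.length := List.length_pos_iff.mpr hW
  simp only [segment, List.length_take, List.length_rotate, length_flatten_replicate]
  have : l ≤ (l + 1) * W.length := by nlinarith
  omega

lemma segment_getElem {W : List (Letter n)} (hW : W ≠ []) {i l m : ℕ} (hm : m < l) :
    (segment W i l)[m]'(by rw [segment_length hW]; exact hm) = cyc W hW (i + m) := by
  have hL : 0 < W.length := List.length_pos_iff.mpr hW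
  have hlen : ((List.replicate (l+1) W).flatten).length = (l+1) * W.length :=
    length_flatten_replicate W (l+1)
  unfold segment
  rw [List.getElem_take]
  have hm2 : m < (((List.replicate (l + 1) W).flatten).rotate i).length := by
    rw [List.length_rotate, hlen]; nlinarith
  rw [show ((((List.replicate (l + 1) W).flatten).rotate i))[m] =
      (((List.replicate (l + 1) W).flatten).rotate i).get ⟨m, hm2⟩ from rfl,
    List.get_rotate]
  rw [show (((List.replicate (l + 1) W).flatten).get _) =
      ((List.replicate (l + 1) W).flatten)[(m + i) % ((List.replicate (l+1) W).flatten).length]'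
        (Nat.mod_lt _ (by rw [hlen]; positivity)) from rfl]
  rw [getElem_flatten_replicate hW]
  apply cyc_congr
  rw [hlen, Nat.mod_mod_of_dvd _ ⟨l+1, by ring⟩, Nat.add_comm m i]
lemma gE {α : Type*} (l : List α) {i j : ℕ} (h : i = j) {hi : i < l.length} :
    l[i]'hi = l[j]'(h ▸ hi) := by congr 1

lemma reduced_get {P : List (Letter n)} (h : P.Chain' (fun a b => b ≠ bar a))
    {m : ℕ} (hm : m + 1 < P.length) : P[m+1] ≠ bar (P[m]'(by omega)) := by
  have := List.isChain_iff_getElem.mp h m (by omega)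
  simpa using this

lemma mid_eq (p₁ p₂ : Letter n) (Y : List (Letter n)) :
    ((p₁ :: (Y ++ [p₂])).drop 1).dropLast = Y := by
  simp

lemma length_wordInv (Y : List (Letter n)) : (wordInv Y).length = Y.length := by
  simp [wordInv]

lemma getElem_wordInv {Y : List (Letter n)} {m : ℕ} (hm : m < Y.length) :
    (wordInv Y)[m]'(by rw [length_wordInv]; exact hm)
      = bar (Y[Y.length - 1 - m]'(by omega)) := by
  unfold wordInv
  rw [List.getElem_reverse, List.getElem_map]
  congr 2
  simp

lemma wordInv_ne_self {Y : List (Letter n)} (hY : Y ≠ [])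
    (hred : Y.Chain' (fun a b => b ≠ bar a)) : wordInv Y ≠ Y := by
  intro h
  have hk : 0 < Y.length := List.length_pos_iff.mpr hY
  have key : ∀ m, (hm : m < Y.length) →
      Y[m] = bar (Y[Y.length - 1 - m]'(by omega)) := by
    intro m hm
    calc Y[m] = (wordInv Y)[m]'(by rw [length_wordInv]; exact hm) := by
          exact (List.getElem_of_eq h _).symm
      _ = bar (Y[Y.length - 1 - m]'(by omega)) := getElem_wordInv hm
  rcases Nat.even_or_odd Y.length with ⟨c, hc⟩ | ⟨c, hc⟩
  · have hc1 : 1 ≤ c := by omega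
    have h1 := key c (by omega)
    have h2 := reduced_get hred (m := c - 1) (by omega)
    rw [gE Y (show c - 1 + 1 = c from by omega)] at h2
    rw [gE Y (show Y.length - 1 - c = c - 1 from by omega)] at h1
    exact h2 h1
  · have h1 := key c (by omega)
    rw [gE Y (show Y.length - 1 - c = c from by omega)] at h1
    exact bar_ne_self _ h1.symm

lemma decomp {W : List (Letter n)} (hW : W ≠ []) {i l : ℕ} {p₁ p₂ : Letter n}
    {Y : List (Letter n)} (h : segment W i l = p₁ :: (Y ++ [p₂])) :
    l = Y.length + 2 ∧ p₁ = cyc W hW i ∧ p₂ = cyc W hW (i + Y.length + 1) ∧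
    ∀ m, (hm : m < Y.length) → Y[m] = cyc W hW (i + 1 + m) := by
  have hlen : l = Y.length + 2 := by
    have := congrArg List.length h
    rw [segment_length hW] at this
    simp at this
    omega
  refine ⟨hlen, ?_, ?_, ?_⟩
  · have h0 : (segment W i l)[0]'(by rw [segment_length hW]; omega) = p₁ := by
      rw [List.getElem_of_eq h]
      rfl
    rw [segment_getElem hW (by omega)] at h0
    simpa using h0.symm
  · have h0 : (segment W i l)[Y.length + 1]'(by rw [segment_length hW]; omega) = p₂ := by
      rw [List.getElem_of_eq h, List.getElem_cons_succ,
        List.getElem_append_right (le_refl Y.length)]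
      simp
    rw [segment_getElem hW (by omega)] at h0
    rw [← h0]
    apply cyc_congr
    congr 1
  · intro m hm
    have h0 : (segment W i l)[m + 1]'(by rw [segment_length hW]; omega) = Y[m] := by
      rw [List.getElem_of_eq h, List.getElem_cons_succ, List.getElem_append_left hm]
    rw [segment_getElem hW (by omega)] at h0
    rw [← h0]
    apply cyc_congr
    congr 1
    omega
def isT3 (W : List (Letter n)) (e : (ℕ × ℕ) × (ℕ × ℕ)) : Prop :=
  2 < e.1.2 ∧ ((segment W e.2.1 e.2.2).drop 1).dropLast
      = wordInv (((segment W e.1.1 e.1.2).drop 1).dropLast)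

lemma classify {O W : List (Letter n)} (hW : W ≠ []) {i l j l₂ : ℕ}
    (hlp : LinkedPair O (segment W i l) (segment W j l₂)) :
    l₂ = l ∧
    ((l = 2 ∧ ¬ isT3 W ((i,l),(j,l₂)) ∧
       cyc W hW i ≠ cyc W hW j ∧ cyc W hW (i+1) ≠ cyc W hW (j+1) ∧
       cyc W hW j ≠ bar (cyc W hW (i+1))) ∨
     (∃ k, 1 ≤ k ∧ l = k + 2 ∧ ¬ isT3 W ((i,l),(j,l₂)) ∧
       (∀ m, m < k → cyc W hW (i+1+m) = cyc W hW (j+1+m)) ∧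
       cyc W hW i ≠ cyc W hW j ∧
       cyc W hW (i+k+1) ≠ cyc W hW (j+k+1) ∧
       cyc W hW (j+1) ≠ bar (cyc W hW j)) ∨
     (∃ k, 1 ≤ k ∧ l = k + 2 ∧ isT3 W ((i,l),(j,l₂)) ∧
       (∀ m, m < k → cyc W hW (j+k-m) = bar (cyc W hW (i+1+m))) ∧
       cyc W hW (i+k+1) ≠ bar (cyc W hW j) ∧
       cyc W hW (i+1) ≠ bar (cyc W hW i))) := by
  rcases hlp with ⟨p₁,p₂,q₁,q₂,hP,hQ,hL1⟩ | ⟨p₁,p₂,q₁,q₂,x₁,x₂,Y,hP,hQ,hL2⟩ |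
    ⟨p₁,p₂,q₁,q₂,x₁,x₂,Y,hP,hQ,hL3⟩
  · -- type 1
    have hP' : segment W i l = p₁ :: ([] ++ [p₂]) := by simpa using hP
    have hQ' : segment W j l₂ = q₁ :: ([] ++ [q₂]) := by simpa using hQ
    obtain ⟨hl, hp₁, hp₂, -⟩ := decomp hW hP'
    obtain ⟨hl₂, hq₁, hq₂, -⟩ := decomp hW hQ'
    simp only [List.length_nil] at hl hl₂ hp₂ hq₂
    have hnd := orient_nodup hL1.2.2
    simp only [List.nodup_cons, List.mem_cons, List.not_mem_nil, List.mem_singleton,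
      not_or, or_false] at hnd
    obtain ⟨⟨ha1, ha2, ha3⟩, ⟨hb1, hb2⟩, hc1, -⟩ := hnd
    refine ⟨by omega, Or.inl ⟨by omega, ?_, ?_, ?_, ?_⟩⟩
    · rintro ⟨h2, -⟩; simp at h2; omega
    · rw [← hp₁, ← hq₁]; intro h; exact ha1 (by rw [h])
    · rw [← hp₂, ← hq₂]; exact hc1
    · rw [← hq₁, ← hp₂]
      intro h; exact hb1 (by rw [h, bar_bar])
  · -- type 2
    obtain ⟨hl, hp₁, hp₂, hYP⟩ := decomp hW hP
    obtain ⟨hl₂, hq₁, hq₂, hYQ⟩ := decomp hW hQ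
    obtain ⟨hYne, hx₁, hx₂, hpq1, hpq2, hredP, hredQ, -⟩ := hL2
    have hk : 1 ≤ Y.length := List.length_pos_iff.mpr hYne
    have hYchain : Y.Chain' (fun a b => b ≠ bar a) :=
      (List.isChain_append.mp (List.IsChain.tail hredP)).1
    refine ⟨by omega, Or.inr (Or.inl ⟨Y.length, hk, hl, ?_, ?_, ?_, ?_, ?_⟩)⟩
    · rintro ⟨-, hmid⟩
      rw [hP, hQ, mid_eq, mid_eq] at hmid
      exact wordInv_ne_self hYne hYchain hmid.symm
    · intro m hm
      rw [← hYP m hm, ← hYQ m hm]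
    · rw [← hp₁, ← hq₁]; exact hpq1
    · rw [show i + Y.length + 1 = i + Y.length + 1 from rfl, ← hp₂, ← hq₂]; exact hpq2
    · have hredQ' : Reduced (segment W j l₂) := by rw [hQ]; exact hredQ
      have h := reduced_get hredQ' (m := 0)
        (by rw [segment_length hW]; omega)
      rw [segment_getElem hW (show 1 < l₂ by omega),
        segment_getElem hW (show 0 < l₂ by omega)] at h
      exact h
  · -- type 3
    obtain ⟨hl, hp₁, hp₂, hYP⟩ := decomp hW hP
    obtain ⟨hl₂, hq₁, hq₂, hYQ⟩ := decomp hW hQ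
    obtain ⟨hYne, hx₁, hx₂, hpq1, hpq2, hredP, hredQ, -⟩ := hL3
    have hk : 1 ≤ Y.length := List.length_pos_iff.mpr hYne
    rw [length_wordInv] at hl₂
    refine ⟨by omega, Or.inr (Or.inr ⟨Y.length, hk, hl, ?_, ?_, ?_, ?_⟩)⟩
    · exact ⟨by simp; omega, by rw [hP, hQ, mid_eq, mid_eq]⟩
    · intro m hm
      have h1 := hYQ (Y.length - 1 - m) (by rw [length_wordInv]; omega)
      have h2 := getElem_wordInv (Y := Y) (m := Y.length - 1 - m) (by omega)
      rw [gE Y (show Y.length - 1 - (Y.length - 1 - m) = m from by omega)] at h2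
      rw [h2] at h1
      rw [← hYP m hm, h1]
      apply cyc_congr
      congr 1
      omega
    · rw [← hp₂, ← hq₁]; exact hpq2
    · have hredP' : Reduced (segment W i l) := by rw [hP]; exact hredP
      have h := reduced_get hredP' (m := 0)
        (by rw [segment_length hW]; omega)
      rw [segment_getElem hW (show 1 < l by omega),
        segment_getElem hW (show 0 < l by omega)] at h
      exact h
/-- Proposition 2.7(b): for a reduced cyclic word `W`, the set
`LP₁(W)` of linked pairs of occurrences of subwords of `W` is finite and has at
most `len W · (len W - 1)` elements. -/
theorem LP1_card_le {n : ℕ} (O W : List (Letter n))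
    (hO : SurfaceSymbol O) (hW : CyclicallyReduced W) :
    (LP1 O W).Finite ∧ (LP1 O W).ncard ≤ W.length * (W.length - 1) := by
  classical
  obtain ⟨hWne, -⟩ := hW
  have hL0 : 0 < W.length := List.length_pos_iff.mpr hWne
  set L := W.length with hLdef
  set f : (ℕ × ℕ) × (ℕ × ℕ) → ℕ × ℕ := fun e =>
    (e.1.1, if isT3 W e then (e.2.1 + e.2.2 - 2) % L else e.2.1) with hf
  set S : Finset (ℕ × ℕ) := (Finset.range L).offDiag with hS
  have hmaps : Set.MapsTo f (LP1 O W) ↑S := by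
    rintro ⟨⟨i,l⟩,⟨j,l₂⟩⟩ he
    obtain ⟨hi, hj, hl1, hl2, hlp⟩ := he
    dsimp only at hi hj hl1 hl2 hlp
    obtain ⟨hll, hcl⟩ := classify hWne hlp
    simp only [hS, Finset.mem_coe, Finset.mem_offDiag, Finset.mem_range, hf]
    rcases hcl with ⟨h2, hn3, hij, -, -⟩ | ⟨k, hk, hlk, hn3, hagr, hij, -, -⟩ |
      ⟨k, hk, hlk, h3, hagr, -, hred⟩
    · rw [if_neg hn3]
      exact ⟨hi, hj, fun h => hij (by rw [h])⟩
    · rw [if_neg hn3]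
      exact ⟨hi, hj, fun h => hij (by rw [h])⟩
    · rw [if_pos h3]
      refine ⟨hi, Nat.mod_lt _ hL0, ?_⟩
      intro h
      have e1 : j + l₂ - 2 = j + k := by omega
      rw [e1] at h
      have hc1 : cyc W hWne i = cyc W hWne (j + k) := by
        apply cyc_congr
        rw [Nat.mod_eq_of_lt hi, h, hLdef]
      have hc2 := hagr 0 (by omega)
      simp only [Nat.sub_zero, Nat.add_zero] at hc2
      apply hred
      rw [hc1, hc2, bar_bar]
  have hinj : Set.InjOn f (LP1 O W) := by
    rintro ⟨⟨i,l⟩,⟨j,l₂⟩⟩ he ⟨⟨i',l'⟩,⟨j',l₂'⟩⟩ he' hfe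
    obtain ⟨hi, hj, hl1, hl2, hlp⟩ := he
    obtain ⟨hi', hj', hl1', hl2', hlp'⟩ := he'
    dsimp only at hi hj hl1 hl2 hlp hi' hj' hl1' hl2' hlp'
    obtain ⟨hll, hcl⟩ := classify hWne hlp
    obtain ⟨hll', hcl'⟩ := classify hWne hlp'
    have hii : i = i' := by
      have := congrArg Prod.fst hfe
      simpa [hf] using this
    subst hii
    have hsnd := congrArg Prod.snd hfe
    simp only [hf] at hsnd
    rcases hcl with ⟨h2, hn3, hij, hne1, hne2⟩ | ⟨k, hk, hlk, hn3, hagr, hij, hdiv, hq⟩ |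
      ⟨k, hk, hlk, h3, hagr, hne, hred⟩ <;>
    rcases hcl' with ⟨h2', hn3', hij', hne1', hne2'⟩ | ⟨k', hk', hlk', hn3', hagr', hij', hdiv', hq'⟩ |
      ⟨k', hk', hlk', h3', hagr', hne', hred'⟩
    · -- T1 T1
      rw [if_neg hn3, if_neg hn3'] at hsnd
      simp only [Prod.mk.injEq, true_and, and_true, eq_self_iff_true]
      omega
    · -- T1 T2
      rw [if_neg hn3, if_neg hn3'] at hsnd
      exfalso
      have h := hagr' 0 (by omega)
      simp only [Nat.add_zero] at h
      rw [← hsnd] at h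
      exact hne1 h
    · -- T1 T3
      rw [if_neg hn3, if_pos h3'] at hsnd
      exfalso
      have e1 : j' + l₂' - 2 = j' + k' := by omega
      rw [e1] at hsnd
      have hc1 : cyc W hWne j = cyc W hWne (j' + k') := by
        apply cyc_congr
        rw [Nat.mod_eq_of_lt hj, hsnd, hLdef]
      have h := hagr' 0 (by omega)
      simp only [Nat.sub_zero, Nat.add_zero] at h
      rw [← hc1] at h
      exact hne2 h
    · -- T2 T1
      rw [if_neg hn3, if_neg hn3'] at hsnd
      exfalso
      have h := hagr 0 (by omega)
      simp only [Nat.add_zero] at h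
      rw [hsnd] at h
      exact hne1' h
    · -- T2 T2
      rw [if_neg hn3, if_neg hn3'] at hsnd
      have hkk : k = k' := by
        by_contra hnek
        rcases Nat.lt_or_ge k k' with hlt | hge
        · have h := hagr' k hlt
          rw [← hsnd] at h
          apply hdiv
          have e1 : i + 1 + k = i + k + 1 := by omega
          have e2 : j + 1 + k = j + k + 1 := by omega
          rwa [e1, e2] at h
        · have hlt' : k' < k := by omega
          have h := hagr k' hlt'
          rw [hsnd] at h
          apply hdiv'
          have e1 : i + 1 + k' = i + k' + 1 := by omega
          have e2 : j' + 1 + k' = j' + k' + 1 := by omega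
          rwa [e1, e2] at h
      simp only [Prod.mk.injEq, true_and, and_true, eq_self_iff_true]
      omega
    · -- T2 T3
      rw [if_neg hn3, if_pos h3'] at hsnd
      exfalso
      have e1 : j' + l₂' - 2 = j' + k' := by omega
      rw [e1] at hsnd
      have hc1 : cyc W hWne j = cyc W hWne (j' + k') := by
        apply cyc_congr
        rw [Nat.mod_eq_of_lt hj, hsnd, hLdef]
      have h := hagr' 0 (by omega)
      simp only [Nat.sub_zero, Nat.add_zero] at h
      have h0 := hagr 0 (by omega)
      simp only [Nat.add_zero] at h0
      apply hq
      rw [hc1, h, bar_bar, h0]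
    · -- T3 T1
      rw [if_pos h3, if_neg hn3'] at hsnd
      exfalso
      have e1 : j + l₂ - 2 = j + k := by omega
      rw [e1] at hsnd
      have hc1 : cyc W hWne j' = cyc W hWne (j + k) := by
        apply cyc_congr
        rw [Nat.mod_eq_of_lt hj', ← hsnd, hLdef]
      have h := hagr 0 (by omega)
      simp only [Nat.sub_zero, Nat.add_zero] at h
      rw [← hc1] at h
      exact hne2' h
    · -- T3 T2
      rw [if_pos h3, if_neg hn3'] at hsnd
      exfalso
      have e1 : j + l₂ - 2 = j + k := by omega
      rw [e1] at hsnd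
      have hc1 : cyc W hWne j' = cyc W hWne (j + k) := by
        apply cyc_congr
        rw [Nat.mod_eq_of_lt hj', ← hsnd, hLdef]
      have h := hagr 0 (by omega)
      simp only [Nat.sub_zero, Nat.add_zero] at h
      have h0 := hagr' 0 (by omega)
      simp only [Nat.add_zero] at h0
      apply hq'
      rw [hc1, h, bar_bar, h0]
    · -- T3 T3
      rw [if_pos h3, if_pos h3'] at hsnd
      have e1 : j + l₂ - 2 = j + k := by omega
      have e1' : j' + l₂' - 2 = j' + k' := by omega
      rw [e1, e1'] at hsnd
      have hmod : Nat.ModEq L (j + k) (j' + k') := hsnd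
      have hkk : k = k' := by
        by_contra hnek
        rcases Nat.lt_or_ge k k' with hlt | hge
        · have h := hagr' k hlt
          have hmod2 : Nat.ModEq L (j' + k' - k) j := by
            apply Nat.ModEq.add_right_cancel' k
            rw [show j' + k' - k + k = j' + k' from by omega]
            exact hmod.symm
          have hc1 : cyc W hWne (j' + k' - k) = cyc W hWne j := cyc_congr hWne hmod2
          rw [hc1] at h
          apply hne
          rw [show i + k + 1 = i + 1 + k from by omega, h, bar_bar]
        · have hlt' : k' < k := by omega
          have h := hagr k' hlt'
          have hmod2 : Nat.ModEq L (j + k - k') j' := by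
            apply Nat.ModEq.add_right_cancel' k'
            rw [show j + k - k' + k' = j + k from by omega]
            exact hmod
          have hc1 : cyc W hWne (j + k - k') = cyc W hWne j' := cyc_congr hWne hmod2
          rw [hc1] at h
          apply hne'
          rw [show i + k' + 1 = i + 1 + k' from by omega, h, bar_bar]
      subst hkk
      have hjj : j = j' := by
        have hmod2 : Nat.ModEq L j j' := Nat.ModEq.add_right_cancel' k hmod
        have h5 := hmod2
        unfold Nat.ModEq at h5
        rw [Nat.mod_eq_of_lt (by omega : j < L), Nat.mod_eq_of_lt (by omega : j' < L)] at h5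
        exact h5
      simp only [Prod.mk.injEq, true_and, and_true, eq_self_iff_true]
      omega
  have himg : f '' (LP1 O W) ⊆ ↑S := Set.MapsTo.image_subset hmaps
  have hfin : (LP1 O W).Finite :=
    Set.Finite.of_finite_image (S.finite_toSet.subset himg) hinj
  refine ⟨hfin, ?_⟩
  have h1 : (LP1 O W).ncard = (f '' LP1 O W).ncard :=
    (Set.ncard_image_of_injOn hinj).symm
  have h2 : (f '' LP1 O W).ncard ≤ (↑S : Set (ℕ × ℕ)).ncard :=
    Set.ncard_le_ncard himg S.finite_toSet
  have h3 : (↑S : Set (ℕ × ℕ)).ncard = L * L - L := by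
    rw [Set.ncard_coe_finset, hS, Finset.offDiag_card, Finset.card_range]
  have h4 : L * L - L = L * (L - 1) := by
    cases L with
    | zero => simp
    | succ m => simp only [Nat.succ_sub_one, Nat.mul_succ, Nat.succ_mul]; omega
  calc (LP1 O W).ncard = (f '' LP1 O W).ncard := h1
    _ ≤ (↑S : Set (ℕ × ℕ)).ncard := h2
    _ = L * L - L := h3
    _ = L * (L - 1) := h4
end ChasCW
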